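/- Let H be a cubic graph, x and y distinct nonadjacent vertices of H, x' a neighbor of x, y' a neighbor of y, and F a left-good 2-factor of H with respect to x and y containing neither the edge xx' nor the edge yy'. Then there exists a map σ: E(H) → {1, 2, 3} such that: the edges xx' and yy' receive color 3; the two edges incident to x other than xx' both receive color 1; the two edges incident to y other than yy' both receive color 2; and every vertex u ∉ {x, y} is incident to exactly one edge of each of the colors 1, 2, 3. (The restriction of such a σ to the superedge H_{x,y} is a left coloring of H_{x,y}.) -/

import Mathlib

open SimpleGraph

/-- `F` is a 2-factor of `H`: a spanning subgraph in which every vertex has degree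
exactly `2`. -/
def IsTwoFactor {V : Type*} (H F : SimpleGraph V) : Prop :=
  F ≤ H ∧ ∀ v : V, (F.neighborSet v).ncard = 2

/-- A 2-factor `F` of `H` is left-good with respect to `x` and `y` if the components of
`F` containing `x` and `y` are distinct cycles of odd length and every other component is
a cycle of even length. -/
def LeftGood {V : Type*} (F : SimpleGraph V) (x y : V) : Prop :=
  ¬ F.Reachable x y ∧
  Odd {u : V | F.Reachable u x}.ncard ∧ Odd {u : V | F.Reachable u y}.ncard ∧
  ∀ v : V, ¬ F.Reachable v x → ¬ F.Reachable v y → Even {u : V | F.Reachable u v}.ncard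
set_option linter.unusedSectionVars false
open Fin.NatCast

namespace LGAux

variable {V : Type*} (F : SimpleGraph V)

section WalkStuff

variable (h2 : ∀ v : V, (F.neighborSet v).ncard = 2)

include h2

lemma exists_pair (v : V) : ∃ p : V × V, p.1 ≠ p.2 ∧ F.neighborSet v = {p.1, p.2} := by
  obtain ⟨a, b, hab, h⟩ := Set.ncard_eq_two.mp (h2 v)
  exact ⟨(a, b), hab, h⟩

noncomputable def nb1 (v : V) : V := (exists_pair F h2 v).choose.1
noncomputable def nb2 (v : V) : V := (exists_pair F h2 v).choose.2

lemma nb_ne (v : V) : nb1 F h2 v ≠ nb2 F h2 v := (exists_pair F h2 v).choose_spec.1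

lemma nbrs_eq_pair (v : V) : F.neighborSet v = {nb1 F h2 v, nb2 F h2 v} :=
  (exists_pair F h2 v).choose_spec.2

lemma adj_nb1 (v : V) : F.Adj v (nb1 F h2 v) := by
  have h : nb1 F h2 v ∈ F.neighborSet v := by
    rw [nbrs_eq_pair F h2 v]; exact Set.mem_insert _ _
  exact h

lemma adj_nb2 (v : V) : F.Adj v (nb2 F h2 v) := by
  have h : nb2 F h2 v ∈ F.neighborSet v := by
    rw [nbrs_eq_pair F h2 v]; exact Set.mem_insert_of_mem _ rfl
  exact h

open Classical in
noncomputable def other (v u : V) : V :=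
  if u = nb1 F h2 v then nb2 F h2 v else nb1 F h2 v

lemma adj_other (v u : V) : F.Adj v (other F h2 v u) := by
  unfold other
  split
  · exact adj_nb2 F h2 v
  · exact adj_nb1 F h2 v

lemma mem_pair_of_adj {v u : V} (h : F.Adj v u) :
    u = nb1 F h2 v ∨ u = nb2 F h2 v := by
  have hm : u ∈ F.neighborSet v := h
  rw [nbrs_eq_pair F h2 v] at hm
  exact hm

lemma other_ne {v u : V} (h : F.Adj v u) : other F h2 v u ≠ u := by
  unfold other
  rcases mem_pair_of_adj F h2 h with h1 | h1
  · subst h1; rw [if_pos rfl]; exact (nb_ne F h2 v).symm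
  · subst h1; rw [if_neg (nb_ne F h2 v).symm]; exact nb_ne F h2 v

lemma other_other {v u : V} (h : F.Adj v u) : other F h2 v (other F h2 v u) = u := by
  unfold other
  rcases mem_pair_of_adj F h2 h with h1 | h1
  · subst h1; rw [if_pos rfl, if_neg (nb_ne F h2 v).symm]
  · subst h1; rw [if_neg (nb_ne F h2 v).symm, if_pos rfl]

noncomputable def gseq (s : V) : ℕ → V × V
  | 0 => (s, nb1 F h2 s)
  | n + 1 => ((gseq s n).2, other F h2 (gseq s n).2 (gseq s n).1)

noncomputable def wk (s : V) (n : ℕ) : V := (gseq F h2 s n).1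

lemma wk_zero (s : V) : wk F h2 s 0 = s := rfl

lemma wk_succ (s : V) (n : ℕ) : wk F h2 s (n + 1) = (gseq F h2 s n).2 := rfl

lemma gseq_eq (s : V) (n : ℕ) :
    gseq F h2 s n = (wk F h2 s n, wk F h2 s (n + 1)) := rfl

lemma wk_rec (s : V) (n : ℕ) :
    wk F h2 s (n + 2) = other F h2 (wk F h2 s (n + 1)) (wk F h2 s n) := rfl

lemma adj_wk (s : V) (n : ℕ) : F.Adj (wk F h2 s n) (wk F h2 s (n + 1)) := by
  cases n with
  | zero => exact adj_nb1 F h2 s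
  | succ m => rw [wk_rec]; exact adj_other F h2 _ _

lemma wk_ne_two (s : V) (n : ℕ) : wk F h2 s (n + 2) ≠ wk F h2 s n := by
  rw [wk_rec]; exact other_ne F h2 (adj_wk F h2 s n).symm

lemma wk_rev (s : V) (n : ℕ) :
    other F h2 (wk F h2 s (n + 1)) (wk F h2 s (n + 2)) = wk F h2 s n := by
  rw [wk_rec]; exact other_other F h2 (adj_wk F h2 s n).symm

lemma gseq_cancel (s : V) {i j : ℕ} (h : gseq F h2 s (i + 1) = gseq F h2 s (j + 1)) :
    gseq F h2 s i = gseq F h2 s j := by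
  rw [gseq_eq, gseq_eq, Prod.mk.injEq] at h
  obtain ⟨h1, h2'⟩ := h
  have h0 : wk F h2 s i = wk F h2 s j := by
    rw [← wk_rev F h2 s i, ← wk_rev F h2 s j, h1, h2']
  rw [gseq_eq, gseq_eq, h0, h1]

lemma gseq_cancel_add (s : V) {i j : ℕ} (t : ℕ)
    (h : gseq F h2 s (i + t) = gseq F h2 s (j + t)) :
    gseq F h2 s i = gseq F h2 s j := by
  induction t with
  | zero => exact h
  | succ m ih => exact ih (gseq_cancel F h2 s h)

lemma exists_per [Fintype V] (s : V) :
    ∃ n, 0 < n ∧ gseq F h2 s n = gseq F h2 s 0 := by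
  obtain ⟨i, j, hij, heq⟩ := Finite.exists_ne_map_eq_of_infinite (gseq F h2 s)
  rcases Nat.lt_or_ge i j with h | h
  · refine ⟨j - i, by omega, ?_⟩
    apply gseq_cancel_add F h2 s i
    rw [Nat.zero_add, show j - i + i = j by omega] at *
    exact heq.symm
  · have hlt : j < i := by omega
    refine ⟨i - j, by omega, ?_⟩
    apply gseq_cancel_add F h2 s j
    rw [Nat.zero_add, show i - j + j = i by omega]
    exact heq

variable [Fintype V]

noncomputable def per (s : V) : ℕ :=
  sInf {n : ℕ | 0 < n ∧ gseq F h2 s n = gseq F h2 s 0}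

lemma per_spec (s : V) :
    0 < per F h2 s ∧ gseq F h2 s (per F h2 s) = gseq F h2 s 0 :=
  Nat.sInf_mem (exists_per F h2 s)

lemma per_pos (s : V) : 0 < per F h2 s := (per_spec F h2 s).1

lemma gseq_per (s : V) : gseq F h2 s (per F h2 s) = gseq F h2 s 0 := (per_spec F h2 s).2

lemma per_min (s : V) {m : ℕ} (h1 : 0 < m) (h3 : gseq F h2 s m = gseq F h2 s 0) :
    per F h2 s ≤ m := Nat.sInf_le ⟨h1, h3⟩

lemma gseq_add_per (s : V) (n : ℕ) :
    gseq F h2 s (n + per F h2 s) = gseq F h2 s n := by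
  induction n with
  | zero => rw [Nat.zero_add]; exact gseq_per F h2 s
  | succ m ih =>
      rw [show m + 1 + per F h2 s = (m + per F h2 s) + 1 by omega]
      show ((gseq F h2 s (m + per F h2 s)).2, _) = _
      rw [ih]
      rfl

lemma wk_add_per (s : V) (n : ℕ) : wk F h2 s (n + per F h2 s) = wk F h2 s n :=
  congrArg Prod.fst (gseq_add_per F h2 s n)

lemma wk_mod (s : V) (n : ℕ) : wk F h2 s n = wk F h2 s (n % per F h2 s) := by
  induction n using Nat.strong_induction_on with
  | _ n ih =>
    by_cases h : n < per F h2 s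
    · rw [Nat.mod_eq_of_lt h]
    · have hp := per_pos F h2 s
      have h1 : n = (n - per F h2 s) + per F h2 s := by omega
      rw [h1, wk_add_per, ih _ (by omega), Nat.add_mod_right]

lemma wk_per (s : V) : wk F h2 s (per F h2 s) = wk F h2 s 0 :=
  congrArg Prod.fst (gseq_per F h2 s)

lemma per_ge_three (s : V) : 3 ≤ per F h2 s := by
  have hp := per_pos F h2 s
  by_contra hc
  have h1 : per F h2 s = 1 ∨ per F h2 s = 2 := by omega
  have hw := wk_per F h2 s
  rcases h1 with h1 | h1
  · rw [h1] at hw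
    exact (adj_wk F h2 s 0).ne' hw
  · rw [h1] at hw
    exact wk_ne_two F h2 s 0 hw

lemma gseq_swap_step (s : V) {m n : ℕ}
    (h : gseq F h2 s m = (gseq F h2 s (n + 1)).swap) :
    gseq F h2 s (m + 1) = (gseq F h2 s n).swap := by
  rw [gseq_eq, gseq_eq, Prod.swap_prod_mk, Prod.mk.injEq] at h
  obtain ⟨h1, h2'⟩ := h
  rw [gseq_eq, gseq_eq, Prod.swap_prod_mk]
  have h3 : wk F h2 s (m + 2) = wk F h2 s n := by
    rw [wk_rec, h1, h2', wk_rev]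
  rw [h2', h3]

lemma gseq_swap_chain (s : V) (t : ℕ) : ∀ m n : ℕ,
    gseq F h2 s m = (gseq F h2 s n).swap → m + 2 * t ≤ n →
    gseq F h2 s (m + t) = (gseq F h2 s (n - t)).swap := by
  induction t with
  | zero => intro m n h _; simpa using h
  | succ r ih =>
      intro m n h hle
      have hn1 : n = (n - 1) + 1 := by omega
      have hstep : gseq F h2 s (m + 1) = (gseq F h2 s (n - 1)).swap := by
        apply gseq_swap_step F h2 s
        rw [← hn1]; exact h
      have := ih (m + 1) (n - 1) hstep (by omega)
      rw [show m + 1 + r = m + (r + 1) by omega] at this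
      rw [show n - 1 - r = n - (r + 1) by omega] at this
      exact this

lemma no_swap (s : V) {m n : ℕ} (h : m ≤ n) :
    gseq F h2 s m ≠ (gseq F h2 s n).swap := by
  intro hswap
  rcases Nat.even_or_odd (n - m) with ⟨t, ht⟩ | ⟨t, ht⟩
  · have hc := gseq_swap_chain F h2 s t m n hswap (by omega)
    rw [show n - t = m + t by omega] at hc
    rw [gseq_eq, Prod.swap_prod_mk, Prod.mk.injEq] at hc
    exact (adj_wk F h2 s (m + t)).ne hc.1
  · have hc := gseq_swap_chain F h2 s t m n hswap (by omega)
    rw [show n - t = m + t + 1 by omega] at hc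
    rw [gseq_eq, gseq_eq, Prod.swap_prod_mk, Prod.mk.injEq] at hc
    exact wk_ne_two F h2 s (m + t) hc.1.symm

lemma wk_injOn (s : V) : ∀ i, i < per F h2 s → ∀ j, j < per F h2 s →
    wk F h2 s i = wk F h2 s j → i = j := by
  suffices H : ∀ i j, i < j → j < per F h2 s → wk F h2 s i ≠ wk F h2 s j by
    intro i hi j hj hij
    rcases lt_trichotomy i j with h | h | h
    · exact absurd hij (H i j h hj)
    · exact h
    · exact absurd hij.symm (H j i h hi)
  intro i j hij hjp heq
  have hne1 : wk F h2 s (i + 1) ≠ wk F h2 s (j + 1) := by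
    intro h1
    have hg : gseq F h2 s i = gseq F h2 s j := by
      rw [gseq_eq, gseq_eq, heq, h1]
    have hg0 : gseq F h2 s (j - i) = gseq F h2 s 0 := by
      apply (gseq_cancel_add F h2 s i ?_).symm
      rw [Nat.zero_add, show j - i + i = j by omega]
      exact hg
    have := per_min F h2 s (by omega) hg0
    omega
  have hnb : F.neighborSet (wk F h2 s i) =
      {wk F h2 s (i + 1), wk F h2 s (j + 1)} := by
    apply (Set.eq_of_subset_of_ncard_le ?_ ?_ (Set.toFinite _)).symm
    · intro w hw
      rcases hw with hw | hw
      · rw [hw]; exact adj_wk F h2 s i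
      · rw [Set.mem_singleton_iff] at hw
        rw [hw, heq]; exact adj_wk F h2 s j
    · rw [h2, Set.ncard_pair hne1]
  have hmem : wk F h2 s (j - 1) ∈ F.neighborSet (wk F h2 s i) := by
    have := adj_wk F h2 s (j - 1)
    rw [show j - 1 + 1 = j by omega] at this
    rw [heq]
    exact this.symm
  rw [hnb] at hmem
  have hj1 : wk F h2 s (j - 1) = wk F h2 s (i + 1) := by
    rcases hmem with h | h
    · exact h
    · rw [Set.mem_singleton_iff] at h
      exfalso
      have := wk_ne_two F h2 s (j - 1)
      rw [show j - 1 + 2 = j + 1 by omega] at this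
      exact this h.symm
  have hswap : gseq F h2 s i = (gseq F h2 s (j - 1)).swap := by
    rw [gseq_eq, gseq_eq, Prod.swap_prod_mk, show j - 1 + 1 = j by omega, heq, hj1]
  exact no_swap F h2 s (by omega) hswap

end WalkStuff

end LGAux
namespace LGAux

variable {V : Type*} (F : SimpleGraph V)
variable (h2 : ∀ v : V, (F.neighborSet v).ncard = 2) [Fintype V]

include h2

lemma edge_unique (s : V) {k n : ℕ} (hk : k < per F h2 s) (hn : n < per F h2 s)
    (h : s(wk F h2 s n, wk F h2 s (n + 1)) = s(wk F h2 s k, wk F h2 s (k + 1))) :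
    n = k := by
  have hp3 := per_ge_three F h2 s
  rw [Sym2.eq_iff] at h
  rcases h with ⟨ha, _⟩ | ⟨ha, hb⟩
  · exact wk_injOn F h2 s n hn k hk ha
  · by_cases hkp : k + 1 < per F h2 s
    · have hnk : n = k + 1 := wk_injOn F h2 s n hn (k + 1) hkp ha
      exfalso
      apply wk_ne_two F h2 s k
      rw [show k + 2 = n + 1 by omega]
      exact hb
    · have hkper : k + 1 = per F h2 s := by omega
      have h0 : wk F h2 s (k + 1) = wk F h2 s 0 := by rw [hkper]; exact wk_per F h2 s
      have hn0 : n = 0 := wk_injOn F h2 s n hn 0 (by omega) (by rw [ha, h0])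
      have h1k : (1 : ℕ) = k := by
        apply wk_injOn F h2 s 1 (by omega) k hk
        rw [← hb, hn0]
      omega

lemma wk_succ_mod (s : V) (n : ℕ) :
    wk F h2 s (n + 1) = wk F h2 s (n % per F h2 s + 1) := by
  have hp3 := per_ge_three F h2 s
  conv_lhs => rw [wk_mod F h2 s (n + 1)]
  conv_rhs => rw [wk_mod F h2 s (n % per F h2 s + 1)]
  congr 1
  conv_lhs => rw [Nat.add_mod n 1]
  rw [Nat.mod_eq_of_lt (show 1 < per F h2 s by omega)]

lemma edge_mod (s : V) {k n : ℕ} (hk : k < per F h2 s)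
    (h : s(wk F h2 s n, wk F h2 s (n + 1)) = s(wk F h2 s k, wk F h2 s (k + 1))) :
    n % per F h2 s = k := by
  apply edge_unique F h2 s hk (Nat.mod_lt _ (per_pos F h2 s))
  rw [← wk_mod, ← wk_succ_mod]
  exact h

lemma nbrs_wk (s : V) (k : ℕ) :
    F.neighborSet (wk F h2 s k) =
      {wk F h2 s (k + per F h2 s + 1), wk F h2 s (k + per F h2 s - 1)} := by
  have hp3 := per_ge_three F h2 s
  have hne : wk F h2 s (k + per F h2 s + 1) ≠ wk F h2 s (k + per F h2 s - 1) := by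
    have := wk_ne_two F h2 s (k + per F h2 s - 1)
    rw [show k + per F h2 s - 1 + 2 = k + per F h2 s + 1 by omega] at this
    exact this
  apply (Set.eq_of_subset_of_ncard_le ?_ ?_ (Set.toFinite _)).symm
  · intro w hw
    rcases hw with hw | hw
    · rw [hw]
      have := adj_wk F h2 s (k + per F h2 s)
      rw [wk_add_per] at this
      exact this
    · rw [Set.mem_singleton_iff] at hw
      rw [hw]
      have := adj_wk F h2 s (k + per F h2 s - 1)
      rw [show k + per F h2 s - 1 + 1 = k + per F h2 s by omega, wk_add_per] at this
      exact this.symm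
  · rw [h2, Set.ncard_pair hne]

lemma reach_wk (s : V) (n : ℕ) : F.Reachable s (wk F h2 s n) := by
  induction n with
  | zero => exact Reachable.refl s
  | succ m ih => exact ih.trans (adj_wk F h2 s m).reachable

lemma reach_imp_wk (s u : V) (h : F.Reachable s u) :
    ∃ k, k < per F h2 s ∧ wk F h2 s k = u := by
  have key : ∀ a b : V, F.Walk a b → (∃ m, wk F h2 s m = a) → ∃ m, wk F h2 s m = b := by
    intro a b w
    induction w with
    | nil => exact fun h => h
    | @cons c d e hadj q ih =>
        rintro ⟨m, hm⟩
        apply ih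
        have hd : d ∈ F.neighborSet (wk F h2 s m) := by rw [hm]; exact hadj
        rw [nbrs_wk F h2 s m] at hd
        rcases hd with hd | hd
        · exact ⟨m + per F h2 s + 1, hd.symm⟩
        · rw [Set.mem_singleton_iff] at hd
          exact ⟨m + per F h2 s - 1, hd.symm⟩
  obtain ⟨w⟩ := h
  obtain ⟨m, hm⟩ := key s u w ⟨0, rfl⟩
  exact ⟨m % per F h2 s, Nat.mod_lt _ (per_pos F h2 s), by rw [← wk_mod]; exact hm⟩

lemma component_eq (s : V) :
    {u : V | F.Reachable s u} = wk F h2 s '' Set.Iio (per F h2 s) := by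
  ext u
  constructor
  · intro h
    obtain ⟨k, hk, hwk⟩ := reach_imp_wk F h2 s u h
    exact ⟨k, hk, hwk⟩
  · rintro ⟨k, _, rfl⟩
    exact reach_wk F h2 s k

lemma ncard_component (s : V) :
    {u : V | F.Reachable s u}.ncard = per F h2 s := by
  rw [component_eq F h2 s]
  have hinj : Set.InjOn (wk F h2 s) (Set.Iio (per F h2 s)) :=
    fun i hi j hj hij => wk_injOn F h2 s i hi j hj hij
  rw [Set.ncard_image_of_injOn hinj]
  rw [← Finset.coe_range, Set.ncard_coe_finset, Finset.card_range]

end LGAux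
namespace LGAux

variable {V : Type*} (F : SimpleGraph V)

section Rep

variable (x y : V)

open Classical in
noncomputable def rep (v : V) : V :=
  if F.Reachable v x then x
  else if F.Reachable v y then y
  else Quot.out (F.connectedComponentMk v)

lemma reach_rep (v : V) : F.Reachable v (rep F x y v) := by
  unfold rep
  split_ifs with hx hy
  · exact hx
  · exact hy
  · have h : F.connectedComponentMk (Quot.out (F.connectedComponentMk v)) =
        F.connectedComponentMk v := Quot.out_eq _
    exact (ConnectedComponent.exact h).symm

lemma rep_congr {v w : V} (h : F.Reachable v w) : rep F x y v = rep F x y w := by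
  unfold rep
  by_cases hx : F.Reachable v x
  · rw [if_pos hx, if_pos (h.symm.trans hx)]
  · rw [if_neg hx, if_neg (fun hw => hx (h.trans hw))]
    by_cases hy : F.Reachable v y
    · rw [if_pos hy, if_pos (h.symm.trans hy)]
    · rw [if_neg hy, if_neg (fun hw => hy (h.trans hw))]
      exact congrArg Quot.out (ConnectedComponent.sound h)

lemma rep_x : rep F x y x = x := by
  unfold rep
  rw [if_pos (Reachable.refl x)]

lemma rep_y (h : ¬ F.Reachable y x) : rep F x y y = y := by
  unfold rep
  rw [if_neg h, if_pos (Reachable.refl y)]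

lemma rep_idem (v : V) : rep F x y (rep F x y v) = rep F x y v :=
  (rep_congr F x y (reach_rep F x y v)).symm

end Rep

section Sigma

variable (h2 : ∀ v : V, (F.neighborSet v).ncard = 2) [Fintype V] (x y : V)

noncomputable def posn (e : Sym2 V) : ℕ :=
  sInf {n : ℕ | ∃ u ∈ e,
    e = s(wk F h2 (rep F x y u) n, wk F h2 (rep F x y u) (n + 1))}

open Classical in
noncomputable def esigma (e : Sym2 V) : Fin 3 :=
  if e ∈ F.edgeSet then
    (if ∃ u ∈ e, F.Reachable u y then (((posn F h2 x y e + 1) % 2 : ℕ) : Fin 3)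
     else ((posn F h2 x y e % 2 : ℕ) : Fin 3))
  else 2

lemma posn_spec (u : V) (k : ℕ) (hk : k < per F h2 (rep F x y u)) :
    posn F h2 x y
      (s(wk F h2 (rep F x y u) k, wk F h2 (rep F x y u) (k + 1))) = k := by
  set s0 := rep F x y u with hs0
  set e : Sym2 V := s(wk F h2 s0 k, wk F h2 s0 (k + 1)) with he
  have hrep : ∀ w ∈ e, rep F x y w = s0 := by
    intro w hw
    rw [he, Sym2.mem_iff] at hw
    have hrs : rep F x y s0 = s0 := by rw [hs0]; exact rep_idem F x y u
    rcases hw with hw | hw <;>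
      · rw [hw, rep_congr F x y (reach_wk F h2 s0 _).symm, hrs]
  have hk_mem : k ∈ {n : ℕ | ∃ w ∈ e,
      e = s(wk F h2 (rep F x y w) n, wk F h2 (rep F x y w) (n + 1))} := by
    refine ⟨wk F h2 s0 k, ?_, ?_⟩
    · rw [he]; exact Sym2.mem_mk_left _ _
    · rw [hrep _ (by rw [he]; exact Sym2.mem_mk_left _ _)]
  have hlb : ∀ n ∈ {n : ℕ | ∃ w ∈ e,
      e = s(wk F h2 (rep F x y w) n, wk F h2 (rep F x y w) (n + 1))}, k ≤ n := by
    rintro n ⟨w, hw, hn⟩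
    rw [hrep w hw] at hn
    have := edge_mod F h2 s0 hk (by rw [← hn, he])
    calc k = n % per F h2 s0 := this.symm
      _ ≤ n := Nat.mod_le _ _
  exact le_antisymm (Nat.sInf_le hk_mem)
    (hlb _ (Nat.sInf_mem (⟨k, hk_mem⟩ : Set.Nonempty _)))

lemma esigma_not_edge {e : Sym2 V} (he : e ∉ F.edgeSet) : esigma F h2 x y e = 2 := by
  unfold esigma
  rw [if_neg he]

lemma esigma_edge_cases {e : Sym2 V} (he : e ∈ F.edgeSet) :
    esigma F h2 x y e = 0 ∨ esigma F h2 x y e = 1 := by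
  unfold esigma
  rw [if_pos he]
  split_ifs with h
  · rcases Nat.mod_two_eq_zero_or_one (posn F h2 x y e + 1) with h1 | h1 <;> rw [h1] <;> simp
  · rcases Nat.mod_two_eq_zero_or_one (posn F h2 x y e) with h1 | h1 <;> rw [h1] <;> simp

lemma reach_of_mem_edge {e : Sym2 V} {u w : V} (he : e ∈ F.edgeSet)
    (hu : u ∈ e) (hw : w ∈ e) : F.Reachable u w := by
  induction e with
  | _ a b =>
    rw [Sym2.mem_iff] at hu hw
    rw [SimpleGraph.mem_edgeSet] at he
    rcases hu with rfl | rfl <;> rcases hw with rfl | rfl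
    · exact Reachable.refl _
    · exact he.reachable
    · exact he.symm.reachable
    · exact Reachable.refl _

lemma esigma_val_of_reach {e : Sym2 V} {u : V} (he : e ∈ F.edgeSet) (hu : u ∈ e)
    (hy : F.Reachable u y) :
    esigma F h2 x y e = (((posn F h2 x y e + 1) % 2 : ℕ) : Fin 3) := by
  unfold esigma
  rw [if_pos he, if_pos ⟨u, hu, hy⟩]

lemma esigma_val_of_not_reach {e : Sym2 V} {u : V} (he : e ∈ F.edgeSet) (hu : u ∈ e)
    (hy : ¬ F.Reachable u y) :
    esigma F h2 x y e = ((posn F h2 x y e % 2 : ℕ) : Fin 3) := by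
  unfold esigma
  rw [if_pos he, if_neg ?_]
  rintro ⟨w, hw, hwy⟩
  exact hy ((reach_of_mem_edge F he hu hw).trans hwy)

end Sigma

end LGAux
namespace LGAux

variable {V : Type*} (F : SimpleGraph V)
variable (h2 : ∀ v : V, (F.neighborSet v).ncard = 2) [Fintype V] (x y : V)

include h2

lemma rep_of_reach_x {u : V} (h : F.Reachable u x) : rep F x y u = x := by
  unfold rep; rw [if_pos h]

lemma rep_of_reach_y {u : V} (hx : ¬ F.Reachable u x) (h : F.Reachable u y) :
    rep F x y u = y := by
  unfold rep; rw [if_neg hx, if_pos h]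

lemma vertex_edges (u : V) :
    ∃ k k' : ℕ,
      k < per F h2 (rep F x y u) ∧ k' < per F h2 (rep F x y u) ∧
      wk F h2 (rep F x y u) k = u ∧ wk F h2 (rep F x y u) (k' + 1) = u ∧
      ((k = 0 ∧ k' + 1 = per F h2 (rep F x y u)) ∨ k = k' + 1) ∧
      (∀ e ∈ F.edgeSet, u ∈ e →
        e = s(wk F h2 (rep F x y u) k, wk F h2 (rep F x y u) (k + 1)) ∨
        e = s(wk F h2 (rep F x y u) k', wk F h2 (rep F x y u) (k' + 1))) := by
  classical
  set s0 := rep F x y u with hs0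
  have hp3 := per_ge_three F h2 s0
  obtain ⟨k, hk, hwk⟩ := reach_imp_wk F h2 s0 u (reach_rep F x y u).symm
  set k' : ℕ := if k = 0 then per F h2 s0 - 1 else k - 1 with hk'def
  have hk' : k' < per F h2 s0 := by rw [hk'def]; split <;> omega
  have hwk' : wk F h2 s0 (k' + 1) = u := by
    rw [hk'def]
    split
    · rename_i h0
      rw [show per F h2 s0 - 1 + 1 = per F h2 s0 by omega, wk_per, ← h0, hwk]
    · rename_i h0
      rw [show k - 1 + 1 = k by omega, hwk]
  have hprev : wk F h2 s0 (k + per F h2 s0 - 1) = wk F h2 s0 k' := by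
    rw [hk'def]
    split
    · rename_i h0; rw [h0, Nat.zero_add]
    · rename_i h0
      rw [show k + per F h2 s0 - 1 = (k - 1) + per F h2 s0 by omega, wk_add_per]
  refine ⟨k, k', hk, hk', hwk, hwk', by rw [hk'def]; split <;> omega, ?_⟩
  intro e he hue
  obtain ⟨w, rfl⟩ := Sym2.mem_iff_exists.mp hue
  have hadj : F.Adj u w := (F.mem_edgeSet).mp he
  have hw : w ∈ F.neighborSet (wk F h2 s0 k) := by rw [hwk]; exact hadj
  rw [nbrs_wk F h2 s0 k] at hw
  rcases hw with hw | hw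
  · left
    rw [show k + per F h2 s0 + 1 = (k + 1) + per F h2 s0 by omega, wk_add_per] at hw
    rw [hw, hwk]
  · right
    rw [Set.mem_singleton_iff] at hw
    rw [hprev] at hw
    rw [hw, ← hwk']
    exact Sym2.eq_swap

lemma per_x_odd (hox : Odd {u : V | F.Reachable u x}.ncard) : Odd (per F h2 x) := by
  have hs : {u : V | F.Reachable u x} = {u : V | F.Reachable x u} := by
    ext u; exact ⟨Reachable.symm, Reachable.symm⟩
  rw [hs, ncard_component F h2 x] at hox
  exact hox

lemma per_even_of (u : V) (hev : Even {w : V | F.Reachable w u}.ncard) :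
    Even (per F h2 (rep F x y u)) := by
  have hset : {w : V | F.Reachable (rep F x y u) w} = {w : V | F.Reachable w u} := by
    ext w
    constructor
    · intro h; exact h.symm.trans (reach_rep F x y u).symm
    · intro h; exact (reach_rep F x y u).symm.trans h.symm
  rw [← ncard_component F h2 (rep F x y u), hset]
  exact hev

lemma exists_nonF {H : SimpleGraph V} (hle : F ≤ H) {v : V}
    (h3 : (H.neighborSet v).ncard = 3) : ∃ z : V, H.Adj v z ∧ ¬ F.Adj v z := by
  have hss : F.neighborSet v ⊂ H.neighborSet v := by
    refine ⟨fun w hw => hle hw, fun heq => ?_⟩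
    have := h2 v
    rw [Set.eq_of_subset_of_ncard_le heq (by rw [h3, h2]; omega) (Set.toFinite _)] at h3
    omega
  obtain ⟨z, hz, hznF⟩ := Set.exists_of_ssubset hss
  exact ⟨z, hz, hznF⟩

lemma nonF_nbrs {H : SimpleGraph V} (hle : F ≤ H) {v z : V}
    (h3 : (H.neighborSet v).ncard = 3) (hz : H.Adj v z) (hznF : ¬ F.Adj v z) :
    H.neighborSet v = insert z (F.neighborSet v) := by
  apply (Set.eq_of_subset_of_ncard_le ?_ ?_ (Set.toFinite _)).symm
  · intro w hw
    rcases hw with rfl | hw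
    · exact hz
    · exact hle hw
  · have hzn : z ∉ F.neighborSet v := fun h => hznF h
    rw [h3, Set.ncard_insert_of_notMem hzn (Set.toFinite _), h2]

end LGAux
open LGAux in
theorem leftGood_two_factor_yields_left_coloring
    {V : Type*} [Fintype V] (H : SimpleGraph V)
    (hcubic : ∀ v : V, (H.neighborSet v).ncard = 3)
    (x y x' y' : V) (hxy : x ≠ y) (hnadj : ¬ H.Adj x y)
    (hx' : H.Adj x x') (hy' : H.Adj y y')
    (F : SimpleGraph V) (hF : IsTwoFactor H F) (hlg : LeftGood F x y)
    (havoidx : ¬ F.Adj x x') (havoidy : ¬ F.Adj y y') :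
    ∃ σ : Sym2 V → Fin 3,
      σ s(x, x') = 2 ∧ σ s(y, y') = 2 ∧
      (∀ e ∈ H.edgeSet, x ∈ e → e ≠ s(x, x') → σ e = 0) ∧
      (∀ e ∈ H.edgeSet, y ∈ e → e ≠ s(y, y') → σ e = 1) ∧
      ∀ u : V, u ≠ x → u ≠ y → ∀ c : Fin 3,
        ∃! e : Sym2 V, e ∈ H.edgeSet ∧ u ∈ e ∧ σ e = c := by
  classical
  obtain ⟨hle, h2⟩ := hF
  obtain ⟨hnxy, hox, hoy, hev⟩ := hlg
  have hnyx : ¬ F.Reachable y x := fun h => hnxy h.symm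
  have hrx : rep F x y x = x := rep_x F x y
  have hry : rep F x y y = y := rep_y F x y hnyx
  have hpx : Odd (per F h2 x) := per_x_odd F h2 x hox
  have hpy : Odd (per F h2 y) := per_x_odd F h2 y hoy
  refine ⟨esigma F h2 x y, ?_, ?_, ?_, ?_, ?_⟩
  · exact esigma_not_edge F h2 x y (fun h => havoidx ((F.mem_edgeSet).mp h))
  · exact esigma_not_edge F h2 x y (fun h => havoidy ((F.mem_edgeSet).mp h))
  -- edges at x get color 0
  · intro e heH hxe hne
    obtain ⟨w, rfl⟩ := Sym2.mem_iff_exists.mp hxe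
    have hwx' : w ≠ x' := fun h => hne (by rw [h])
    have hFadj : F.Adj x w := by
      have hnbrs := nonF_nbrs F h2 hle (hcubic x) hx' havoidx
      have hw : w ∈ H.neighborSet x := (H.mem_edgeSet).mp heH
      rw [hnbrs] at hw
      rcases hw with rfl | hw
      · exact absurd rfl hwx'
      · exact hw
    have heF : s(x, w) ∈ F.edgeSet := (F.mem_edgeSet).mpr hFadj
    rw [esigma_val_of_not_reach F h2 x y heF (Sym2.mem_mk_left x w) hnxy]
    obtain ⟨k, k', hk, hk', hwk, hwk', hd, hcov⟩ := vertex_edges F h2 x y x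
    rw [hrx] at hk hk' hwk hwk' hd hcov
    have hppos := per_pos F h2 x
    have hk0 : k = 0 := wk_injOn F h2 x k hk 0 hppos (hwk.trans (wk_zero F h2 x).symm)
    have hk'per : k' + 1 = per F h2 x := by
      rcases hd with ⟨_, h⟩ | h
      · exact h
      · omega
    have hp0 : posn F h2 x y (s(wk F h2 x k, wk F h2 x (k + 1))) = k := by
      have := posn_spec F h2 x y x k (by rw [hrx]; exact hk)
      rw [hrx] at this; exact this
    have hp0' : posn F h2 x y (s(wk F h2 x k', wk F h2 x (k' + 1))) = k' := by
      have := posn_spec F h2 x y x k' (by rw [hrx]; exact hk')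
      rw [hrx] at this; exact this
    obtain ⟨t, ht⟩ := hpx
    rcases hcov _ heF (Sym2.mem_mk_left x w) with hcase | hcase <;> rw [hcase]
    · rw [hp0, hk0]; norm_num
    · rw [hp0', show k' % 2 = 0 by omega]; norm_num
  -- edges at y get color 1
  · intro e heH hye hne
    obtain ⟨w, rfl⟩ := Sym2.mem_iff_exists.mp hye
    have hwy' : w ≠ y' := fun h => hne (by rw [h])
    have hFadj : F.Adj y w := by
      have hnbrs := nonF_nbrs F h2 hle (hcubic y) hy' havoidy
      have hw : w ∈ H.neighborSet y := (H.mem_edgeSet).mp heH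
      rw [hnbrs] at hw
      rcases hw with rfl | hw
      · exact absurd rfl hwy'
      · exact hw
    have heF : s(y, w) ∈ F.edgeSet := (F.mem_edgeSet).mpr hFadj
    rw [esigma_val_of_reach F h2 x y heF (Sym2.mem_mk_left y w) (Reachable.refl y)]
    obtain ⟨k, k', hk, hk', hwk, hwk', hd, hcov⟩ := vertex_edges F h2 x y y
    rw [hry] at hk hk' hwk hwk' hd hcov
    have hppos := per_pos F h2 y
    have hk0 : k = 0 := wk_injOn F h2 y k hk 0 hppos (hwk.trans (wk_zero F h2 y).symm)
    have hk'per : k' + 1 = per F h2 y := by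
      rcases hd with ⟨_, h⟩ | h
      · exact h
      · omega
    have hp0 : posn F h2 x y (s(wk F h2 y k, wk F h2 y (k + 1))) = k := by
      have := posn_spec F h2 x y y k (by rw [hry]; exact hk)
      rw [hry] at this; exact this
    have hp0' : posn F h2 x y (s(wk F h2 y k', wk F h2 y (k' + 1))) = k' := by
      have := posn_spec F h2 x y y k' (by rw [hry]; exact hk')
      rw [hry] at this; exact this
    obtain ⟨t, ht⟩ := hpy
    rcases hcov _ heF (Sym2.mem_mk_left y w) with hcase | hcase <;> rw [hcase]
    · rw [hp0, hk0]; norm_num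
    · rw [hp0', show (k' + 1) % 2 = 1 by omega]; norm_num
  -- all other vertices see all three colors
  · intro u hux huy c
    obtain ⟨k, k', hk, hk', hwk, hwk', hd, hcov⟩ := vertex_edges F h2 x y u
    set s0 := rep F x y u with hs0
    obtain ⟨d, hd01, hval⟩ : ∃ d : ℕ, (d = 0 ∨ d = 1) ∧
        ∀ e, e ∈ F.edgeSet → u ∈ e →
          esigma F h2 x y e = (((posn F h2 x y e + d) % 2 : ℕ) : Fin 3) := by
      by_cases hy : F.Reachable u y
      · exact ⟨1, Or.inr rfl, fun e heF hue => esigma_val_of_reach F h2 x y heF hue hy⟩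
      · refine ⟨0, Or.inl rfl, fun e heF hue => ?_⟩
        rw [esigma_val_of_not_reach F h2 x y heF hue hy, Nat.add_zero]
    have hppos := per_pos F h2 s0
    have hp3 := per_ge_three F h2 s0
    have hpar : k % 2 ≠ k' % 2 := by
      rcases hd with ⟨hk0, hk'per⟩ | hkk'
      · have hu_eq : s0 = u := by
          have h0 : wk F h2 s0 0 = u := by rw [← hk0]; exact hwk
          rw [wk_zero F h2] at h0
          exact h0
        have hnrux : ¬ F.Reachable u x := by
          intro h
          have hrep : rep F x y u = x := rep_of_reach_x F h2 x y h
          rw [← hs0, hu_eq] at hrep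
          exact hux hrep
        have hnruy : ¬ F.Reachable u y := by
          intro h
          have hrep : rep F x y u = y := rep_of_reach_y F h2 x y hnrux h
          rw [← hs0, hu_eq] at hrep
          exact huy hrep
        have heven : Even (per F h2 s0) := by
          have := per_even_of F h2 x y u (hev u hnrux hnruy)
          rw [← hs0] at this
          exact this
        obtain ⟨t, ht⟩ := heven
        omega
      · omega
    have hp1 : posn F h2 x y (s(wk F h2 s0 k, wk F h2 s0 (k + 1))) = k := by
      have := posn_spec F h2 x y u k (by rw [← hs0]; exact hk)
      rw [← hs0] at this; exact this
    have hp2 : posn F h2 x y (s(wk F h2 s0 k', wk F h2 s0 (k' + 1))) = k' := by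
      have := posn_spec F h2 x y u k' (by rw [← hs0]; exact hk')
      rw [← hs0] at this; exact this
    have he₁F : s(wk F h2 s0 k, wk F h2 s0 (k + 1)) ∈ F.edgeSet :=
      (F.mem_edgeSet).mpr (adj_wk F h2 s0 k)
    have he₂F : s(wk F h2 s0 k', wk F h2 s0 (k' + 1)) ∈ F.edgeSet :=
      (F.mem_edgeSet).mpr (adj_wk F h2 s0 k')
    have hue₁ : u ∈ s(wk F h2 s0 k, wk F h2 s0 (k + 1)) := by
      rw [← hwk]; exact Sym2.mem_mk_left _ _
    have hue₂ : u ∈ s(wk F h2 s0 k', wk F h2 s0 (k' + 1)) := by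
      rw [← hwk']; exact Sym2.mem_mk_right _ _
    have hv₁ : esigma F h2 x y (s(wk F h2 s0 k, wk F h2 s0 (k + 1))) =
        (((k + d) % 2 : ℕ) : Fin 3) := by rw [hval _ he₁F hue₁, hp1]
    have hv₂ : esigma F h2 x y (s(wk F h2 s0 k', wk F h2 s0 (k' + 1))) =
        (((k' + d) % 2 : ℕ) : Fin 3) := by rw [hval _ he₂F hue₂, hp2]
    obtain ⟨z, hz, hznF⟩ := exists_nonF F h2 hle (hcubic u)
    have hnbrs := nonF_nbrs F h2 hle (hcubic u) hz hznF
    have he₃σ : esigma F h2 x y (s(u, z)) = 2 :=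
      esigma_not_edge F h2 x y (fun h => hznF ((F.mem_edgeSet).mp h))
    have he₁H : s(wk F h2 s0 k, wk F h2 s0 (k + 1)) ∈ H.edgeSet :=
      (H.mem_edgeSet).mpr (hle ((F.mem_edgeSet).mp he₁F))
    have he₂H : s(wk F h2 s0 k', wk F h2 s0 (k' + 1)) ∈ H.edgeSet :=
      (H.mem_edgeSet).mpr (hle ((F.mem_edgeSet).mp he₂F))
    have he₃H : s(u, z) ∈ H.edgeSet := (H.mem_edgeSet).mpr hz
    have hue₃ : u ∈ s(u, z) := Sym2.mem_mk_left _ _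
    have hcovH : ∀ e, e ∈ H.edgeSet → u ∈ e →
        e = s(wk F h2 s0 k, wk F h2 s0 (k + 1)) ∨
        e = s(wk F h2 s0 k', wk F h2 s0 (k' + 1)) ∨ e = s(u, z) := by
      intro e heH hue
      obtain ⟨w, rfl⟩ := Sym2.mem_iff_exists.mp hue
      have hw : w ∈ H.neighborSet u := (H.mem_edgeSet).mp heH
      rw [hnbrs] at hw
      rcases hw with rfl | hw
      · right; right; rfl
      · have heF : s(u, w) ∈ F.edgeSet := (F.mem_edgeSet).mpr hw
        rcases hcov _ heF (Sym2.mem_mk_left u w) with h | h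
        · left; exact h
        · right; left; exact h
    have hne12 : (k + d) % 2 ≠ (k' + d) % 2 := by rcases hd01 with rfl | rfl <;> omega
    fin_cases c
    -- c = 0
    · rcases Nat.mod_two_eq_zero_or_one (k + d) with h0 | h0
      · refine ⟨s(wk F h2 s0 k, wk F h2 s0 (k + 1)),
          ⟨he₁H, hue₁, by rw [hv₁, h0]; decide⟩, ?_⟩
        rintro e' ⟨he'H, hue', hσ⟩
        rcases hcovH e' he'H hue' with rfl | rfl | rfl
        · rfl
        · exfalso; rw [hv₂, show (k' + d) % 2 = 1 by omega] at hσ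
          exact absurd hσ (by decide)
        · exfalso; rw [he₃σ] at hσ; exact absurd hσ (by decide)
      · refine ⟨s(wk F h2 s0 k', wk F h2 s0 (k' + 1)),
          ⟨he₂H, hue₂, by rw [hv₂, show (k' + d) % 2 = 0 by omega]; decide⟩, ?_⟩
        rintro e' ⟨he'H, hue', hσ⟩
        rcases hcovH e' he'H hue' with rfl | rfl | rfl
        · exfalso; rw [hv₁, h0] at hσ; exact absurd hσ (by decide)
        · rfl
        · exfalso; rw [he₃σ] at hσ; exact absurd hσ (by decide)
    -- c = 1
    · rcases Nat.mod_two_eq_zero_or_one (k + d) with h0 | h0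
      · refine ⟨s(wk F h2 s0 k', wk F h2 s0 (k' + 1)),
          ⟨he₂H, hue₂, by rw [hv₂, show (k' + d) % 2 = 1 by omega]; decide⟩, ?_⟩
        rintro e' ⟨he'H, hue', hσ⟩
        rcases hcovH e' he'H hue' with rfl | rfl | rfl
        · exfalso; rw [hv₁, h0] at hσ; exact absurd hσ (by decide)
        · rfl
        · exfalso; rw [he₃σ] at hσ; exact absurd hσ (by decide)
      · refine ⟨s(wk F h2 s0 k, wk F h2 s0 (k + 1)),
          ⟨he₁H, hue₁, by rw [hv₁, h0]; decide⟩, ?_⟩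
        rintro e' ⟨he'H, hue', hσ⟩
        rcases hcovH e' he'H hue' with rfl | rfl | rfl
        · rfl
        · exfalso; rw [hv₂, show (k' + d) % 2 = 0 by omega] at hσ
          exact absurd hσ (by decide)
        · exfalso; rw [he₃σ] at hσ; exact absurd hσ (by decide)
    -- c = 2
    · refine ⟨s(u, z), ⟨he₃H, hue₃, he₃σ⟩, ?_⟩
      rintro e' ⟨he'H, hue', hσ⟩
      rcases hcovH e' he'H hue' with rfl | rfl | rfl
      · exfalso
        rw [hv₁] at hσ
        rcases Nat.mod_two_eq_zero_or_one (k + d) with h0 | h0 <;> rw [h0] at hσ <;>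
          exact absurd hσ (by decide)
      · exfalso
        rw [hv₂] at hσ
        rcases Nat.mod_two_eq_zero_or_one (k' + d) with h0 | h0 <;> rw [h0] at hσ <;>
          exact absurd hσ (by decide)
      · rfl
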